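/- arXiv:1711.05039 — 2 statements merged into one kernel-verified Lean document; each statement's English description precedes it below -/
import Mathlib

section
/- Consider the scalar ODE ż = b(t)z + p(t) with b, p continuous, suppose liminf_{t→∞}(1/t)∫₀ᵗ b(s)ds = μ > 0 and |p(t)| ≤ C e^{−at} with a > 0. If γ := ∫₀^∞ exp(−∫₀ˢ b(τ)dτ) p(s) ds is finite and z(0) + γ ≠ 0, then |z(t)| → ∞ as t → ∞. -/
open MeasureTheory intervalIntegral Filter
open Topology

/-- For `ż = b(t)z + p(t)` with `liminf (1/t)∫₀ᵗ b = μ > 0` and exponentially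
decaying forcing `|p(t)| ≤ C e^{−at}`, if `γ = ∫₀^∞ e^{−∫₀ˢ b} p(s) ds` is finite and
`z(0) + γ ≠ 0`, then `|z(t)| → ∞`. -/
theorem stmt16 (b p z : ℝ → ℝ) (μ C a γ : ℝ)
    (hb : Continuous b) (hp : Continuous p)
    (hz : ∀ t, HasDerivAt z (b t * z t + p t) t)
    (hμ : Filter.liminf (fun t => (1 / t) * ∫ s in (0:ℝ)..t, b s) Filter.atTop = μ)
    (hμpos : 0 < μ)
    (ha : 0 < a) (hpdecay : ∀ t, 0 ≤ t → |p t| ≤ C * Real.exp (-a * t))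
    (hint : IntegrableOn
      (fun s => Real.exp (-∫ τ in (0:ℝ)..s, b τ) * p s) (Set.Ioi 0))
    (hγ : γ = ∫ s in Set.Ioi (0:ℝ), Real.exp (-∫ τ in (0:ℝ)..s, b τ) * p s)
    (hz0 : z 0 + γ ≠ 0) :
    Filter.Tendsto (fun t => |z t|) Filter.atTop Filter.atTop := by
  set B : ℝ → ℝ := fun t => ∫ s in (0:ℝ)..t, b s with hBdef
  have hB : ∀ t, HasDerivAt B (b t) t := fun t =>
    intervalIntegral.integral_hasDerivAt_right (hb.intervalIntegrable _ _)
      hb.stronglyMeasurable.stronglyMeasurableAtFilter hb.continuousAt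
  have hBc : Continuous B := continuous_iff_continuousAt.mpr fun t => (hB t).continuousAt
  have hg : ∀ t, HasDerivAt (fun t => Real.exp (-B t) * z t) (Real.exp (-B t) * p t) t := by
    intro t
    have h1 := ((hB t).neg.exp).mul (hz t)
    refine h1.congr_deriv ?_
    simp only [Pi.neg_apply]
    ring
  have hcont : Continuous fun s => Real.exp (-B s) * p s :=
    (Real.continuous_exp.comp hBc.neg).mul hp
  have key : ∀ t, ∫ s in (0:ℝ)..t, Real.exp (-B s) * p s
      = Real.exp (-B t) * z t - Real.exp (-B 0) * z 0 :=
    fun t => intervalIntegral.integral_eq_sub_of_hasDerivAt (fun s _ => hg s)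
      (hcont.intervalIntegrable _ _)
  have hB0 : B 0 = 0 := intervalIntegral.integral_same
  set F : ℝ → ℝ := fun t => ∫ s in (0:ℝ)..t, Real.exp (-B s) * p s with hFdef
  have hzt : ∀ t, z t = Real.exp (B t) * (z 0 + F t) := by
    intro t
    have h2 : Real.exp (-B t) * z t = z 0 + F t := by
      have := key t
      rw [hB0, neg_zero, Real.exp_zero, one_mul] at this
      simp only [hFdef]
      linarith
    rw [← h2, Real.exp_neg]
    field_simp
  have hF : Tendsto F atTop (𝓝 γ) := by
    rw [hγ]
    exact intervalIntegral_tendsto_integral_Ioi 0 hint tendsto_id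
  -- eventual lower bound on B
  set u : ℝ → ℝ := fun t => (1 / t) * ∫ s in (0:ℝ)..t, b s with hudef
  have hev1 : ∀ᶠ t in atTop, μ / 2 ≤ u t := by
    have hliminf : sSup {x : ℝ | ∀ᶠ t in atTop, x ≤ u t} = μ := by
      rw [← hμ, Filter.liminf_eq]
    have hne : {x : ℝ | ∀ᶠ t in atTop, x ≤ u t}.Nonempty := by
      by_contra h
      rw [Set.not_nonempty_iff_eq_empty] at h
      rw [h, Real.sSup_empty] at hliminf
      linarith
    have hbd : BddAbove {x : ℝ | ∀ᶠ t in atTop, x ≤ u t} := by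
      by_contra h
      rw [Real.sSup_of_not_bddAbove h] at hliminf
      linarith
    obtain ⟨x, hxS, hx2⟩ := exists_lt_of_lt_csSup hne
      (show μ / 2 < sSup {x : ℝ | ∀ᶠ t in atTop, x ≤ u t} by rw [hliminf]; linarith)
    exact hxS.mono fun t ht => le_trans hx2.le ht
  have hev2 : ∀ᶠ t in atTop, Real.exp (μ / 2 * t) ≤ Real.exp (B t) := by
    filter_upwards [hev1, eventually_gt_atTop (0:ℝ)] with t h1 h2
    apply Real.exp_le_exp.mpr
    have hBt : B t = u t * t := by
      simp only [hudef, hBdef]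
      field_simp
    rw [hBt]
    nlinarith
  set c : ℝ := |z 0 + γ| / 2 with hcdef
  have hcpos : 0 < c := by
    have := abs_pos.mpr hz0
    simp only [hcdef]; linarith
  have hzc : ∀ᶠ t in atTop, c ≤ |z 0 + F t| := by
    have ht : Tendsto (fun t => |z 0 + F t|) atTop (𝓝 |z 0 + γ|) :=
      (tendsto_const_nhds.add hF).abs
    exact ht.eventually (eventually_ge_nhds (by
      have := abs_pos.mpr hz0
      simp only [hcdef]; linarith))
  have hlow : Tendsto (fun t => c * Real.exp (μ / 2 * t)) atTop atTop := by
    refine Tendsto.const_mul_atTop hcpos ?_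
    exact Real.tendsto_exp_atTop.comp (Tendsto.const_mul_atTop (by linarith) tendsto_id)
  refine tendsto_atTop_mono' atTop ?_ hlow
  filter_upwards [hev2, hzc] with t h2 hc'
  rw [hzt t, abs_mul, abs_of_pos (Real.exp_pos _)]
  calc c * Real.exp (μ / 2 * t) = Real.exp (μ / 2 * t) * c := by ring
    _ ≤ Real.exp (B t) * |z 0 + F t| :=
      mul_le_mul h2 hc' hcpos.le (Real.exp_pos _).le
end

section
/- Let B : [0,∞) → ℝ^{d×d} be continuous, bounded, and upper triangular, and suppose each diagonal average converges: λ_i := lim_{t→∞}(1/t)∫₀ᵗ B_{ii}(s)ds exists with λ_i < 0 for all i. Then every solution of ż = B(t)z converges to 0 exponentially: there exist a > 0 and C > 0 with ‖z(t)‖ ≤ C e^{−at}‖z(0)‖. -/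
open Matrix MeasureTheory intervalIntegral Filter

lemma aux_avg (A : ℝ → ℝ) (hA : Continuous A) (l ε : ℝ) (hε : 0 < ε)
    (h : Tendsto (fun t => (1 / t) * A t) atTop (nhds l)) :
    ∃ c : ℝ, 0 ≤ c ∧ ∀ t, 0 ≤ t → ((l - ε) * t - c ≤ A t ∧ A t ≤ (l + ε) * t + c) := by
  have h2 : ∀ᶠ t in atTop, |(1 / t) * A t - l| < ε := by
    have := Metric.tendsto_nhds.mp h ε hε
    simpa [Real.dist_eq] using this
  obtain ⟨T, hT⟩ := eventually_atTop.mp h2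
  set T₁ : ℝ := max T 1 with hT₁
  obtain ⟨c0, hc0⟩ := isCompact_Icc.exists_bound_of_continuousOn (hA.continuousOn (s := Set.Icc (0:ℝ) T₁))
  have hc0' : 0 ≤ c0 := le_trans (norm_nonneg (A 0)) (hc0 0 ⟨le_refl _, le_trans zero_le_one (le_max_right _ _)⟩)
  refine ⟨c0 + (|l| + ε) * T₁, by positivity, fun t ht => ?_⟩
  rcases le_or_gt t T₁ with h1 | h1
  · have hb := hc0 t ⟨ht, h1⟩
    rw [Real.norm_eq_abs, abs_le] at hb
    have e1 : |(l + ε) * t| ≤ (|l| + ε) * T₁ := by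
      rw [abs_mul, abs_of_nonneg ht]
      have : |l + ε| ≤ |l| + ε := by
        calc |l + ε| ≤ |l| + |ε| := abs_add_le _ _
        _ = |l| + ε := by rw [abs_of_pos hε]
      apply mul_le_mul this h1 ht (by positivity)
    have e2 : |(l - ε) * t| ≤ (|l| + ε) * T₁ := by
      rw [abs_mul, abs_of_nonneg ht]
      have : |l - ε| ≤ |l| + ε := by
        calc |l - ε| ≤ |l| + |ε| := abs_sub _ _
        _ = |l| + ε := by rw [abs_of_pos hε]
      apply mul_le_mul this h1 ht (by positivity)
    rw [abs_le] at e1 e2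
    constructor <;> linarith [e1.1, e2.1]
  · have ht1 : (1:ℝ) ≤ t := le_trans (le_max_right _ _) h1.le
    have htpos : 0 < t := lt_of_lt_of_le zero_lt_one ht1
    have := hT t (le_trans (le_max_left _ _) h1.le)
    rw [abs_lt] at this
    have hA1 : (1 / t) * A t = A t / t := by ring
    rw [hA1] at this
    have l1 : (l - ε) * t < A t := by
      have h3 := this.1
      have : (l - ε) * t < (A t / t) * t := by nlinarith
      rwa [div_mul_cancel₀ _ (ne_of_gt htpos)] at this
    have l2 : A t < (l + ε) * t := by
      have h3 := this.2
      have : (A t / t) * t < (l + ε) * t := by nlinarith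
      rwa [div_mul_cancel₀ _ (ne_of_gt htpos)] at this
    constructor <;> nlinarith [mul_nonneg (abs_nonneg l) (le_trans zero_le_one (le_max_right T 1)), mul_nonneg hε.le (le_trans zero_le_one (le_max_right T 1))]

lemma scalar_decay (a : ℝ → ℝ) (ha : Continuous a) (l : ℝ) (hl : l < 0)
    (hav : Tendsto (fun t => (1 / t) * ∫ s in (0:ℝ)..t, a s) atTop (nhds l))
    (b : ℝ) (hb : 0 < b) :
    ∃ r > 0, ∃ C > 0, ∀ (x f : ℝ → ℝ), Continuous f →
      (∀ t, HasDerivAt x (a t * x t + f t) t) →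
      ∀ K, 0 ≤ K → (∀ t, 0 ≤ t → |f t| ≤ K * Real.exp (-b * t)) →
      ∀ t, 0 ≤ t → |x t| ≤ C * (|x 0| + K) * Real.exp (-r * t) := by
  set A : ℝ → ℝ := fun t => ∫ s in (0:ℝ)..t, a s with hA
  have hAderiv : ∀ t, HasDerivAt A (a t) t := fun t =>
    (ha.integral_hasStrictDerivAt 0 t).hasDerivAt
  have hAcont : Continuous A :=
    Differentiable.continuous fun t => (hAderiv t).differentiableAt
  -- choose epsilon
  set ε : ℝ := min (-l / 2) (b / 4) with hεdef
  have hε : 0 < ε := lt_min (by linarith) (by linarith)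
  obtain ⟨c, hc0, hc⟩ := aux_avg A hAcont l ε hε hav
  set δ : ℝ := min (-(l + ε)) (b - 2 * ε) with hδdef
  have hδ : 0 < δ := by
    apply lt_min
    · have : ε ≤ -l / 2 := min_le_left _ _
      linarith
    · have : ε ≤ b / 4 := min_le_right _ _
      linarith
  set r : ℝ := δ / 2 with hrdef
  have hr : 0 < r := by positivity
  refine ⟨r, hr, Real.exp c + Real.exp (2 * c) * (2 / δ), by positivity,
    fun x f hf hx K hK hfK t ht => ?_⟩
  -- variation of constants
  have hy : ∀ u, HasDerivAt (fun v => Real.exp (-A v) * x v)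
      (Real.exp (-A u) * f u) u := by
    intro u
    have h1 : HasDerivAt (fun v => Real.exp (-A v)) (Real.exp (-A u) * (-a u)) u :=
      (hAderiv u).neg.exp
    have h2 : HasDerivAt (fun v => Real.exp (-A v) * x v) _ u := h1.mul (hx u)
    convert h2 using 1
    ring
  have hcont : Continuous fun s => Real.exp (-A s) * f s :=
    ((Real.continuous_exp.comp hAcont.neg).mul hf)
  have hFTC : ∫ s in (0:ℝ)..t, Real.exp (-A s) * f s
      = Real.exp (-A t) * x t - Real.exp (-A 0) * x 0 :=
    intervalIntegral.integral_eq_sub_of_hasDerivAt (fun s _ => hy s)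
      (hcont.intervalIntegrable 0 t)
  have hA0 : A 0 = 0 := by simp [hA]
  have hxt : x t = Real.exp (A t) * (x 0 + ∫ s in (0:ℝ)..t, Real.exp (-A s) * f s) := by
    rw [hFTC, hA0]
    simp only [neg_zero, Real.exp_zero, one_mul]
    have he : Real.exp (A t) * Real.exp (-A t) = 1 := by
      rw [← Real.exp_add]; simp
    linear_combination (-(x t)) * he
  -- estimates
  have hterm1 : Real.exp (A t) ≤ Real.exp c * Real.exp (-r * t) := by
    rw [← Real.exp_add]
    apply Real.exp_le_exp.mpr
    have h1 := (hc t ht).2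
    have h2 : (l + ε) * t ≤ -δ * t := by
      have : δ ≤ -(l + ε) := min_le_left _ _
      nlinarith
    have h3 : -δ * t ≤ -r * t := by nlinarith
    linarith
  -- integrand bound
  have hintb : ∀ s ∈ Set.Icc (0:ℝ) t,
      Real.exp (A t) * |Real.exp (-A s) * f s| ≤ Real.exp (2 * c) * K * Real.exp (-δ * t) := by
    intro s hs
    obtain ⟨hs0, hst⟩ := hs
    rw [abs_mul, abs_of_pos (Real.exp_pos _), ← mul_assoc, ← Real.exp_add]
    have hfs := hfK s hs0
    have hAub := (hc t ht).2
    have hAlb := (hc s hs0).1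
    have hexp : Real.exp (A t + -A s) ≤ Real.exp (2 * c) * Real.exp ((l + ε) * (t - s) + 2 * ε * s) := by
      rw [← Real.exp_add]
      apply Real.exp_le_exp.mpr
      nlinarith
    calc Real.exp (A t + -A s) * |f s|
        ≤ (Real.exp (2 * c) * Real.exp ((l + ε) * (t - s) + 2 * ε * s)) * (K * Real.exp (-b * s)) := by
          apply mul_le_mul hexp hfs (abs_nonneg _)
          positivity
      _ = Real.exp (2 * c) * K * (Real.exp ((l + ε) * (t - s) + 2 * ε * s) * Real.exp (-b * s)) := by ring
      _ ≤ Real.exp (2 * c) * K * Real.exp (-δ * t) := by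
          apply mul_le_mul_of_nonneg_left _ (by positivity)
          rw [← Real.exp_add]
          apply Real.exp_le_exp.mpr
          have h1 : δ ≤ -(l + ε) := min_le_left _ _
          have h2 : δ ≤ b - 2 * ε := min_le_right _ _
          nlinarith [sub_nonneg.mpr hst]
  -- bound the integral term
  have hint : Real.exp (A t) * |∫ s in (0:ℝ)..t, Real.exp (-A s) * f s|
      ≤ t * (Real.exp (2 * c) * K * Real.exp (-δ * t)) := by
    have h1 : |∫ s in (0:ℝ)..t, Real.exp (-A s) * f s|
        ≤ ∫ s in (0:ℝ)..t, |Real.exp (-A s) * f s| :=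
      intervalIntegral.abs_integral_le_integral_abs ht
    have h2 : Real.exp (A t) * ∫ s in (0:ℝ)..t, |Real.exp (-A s) * f s|
        = ∫ s in (0:ℝ)..t, Real.exp (A t) * |Real.exp (-A s) * f s| :=
      (intervalIntegral.integral_const_mul _ _).symm
    have h3 : (∫ s in (0:ℝ)..t, Real.exp (A t) * |Real.exp (-A s) * f s|)
        ≤ ∫ s in (0:ℝ)..t, Real.exp (2 * c) * K * Real.exp (-δ * t) := by
      apply intervalIntegral.integral_mono_on ht
      · exact ((continuous_const.mul hcont.abs).intervalIntegrable 0 t)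
      · exact (intervalIntegrable_const)
      · exact hintb
    have h4 : (∫ s in (0:ℝ)..t, Real.exp (2 * c) * K * Real.exp (-δ * t))
        = t * (Real.exp (2 * c) * K * Real.exp (-δ * t)) := by
      rw [intervalIntegral.integral_const, smul_eq_mul]; ring
    calc Real.exp (A t) * |∫ s in (0:ℝ)..t, Real.exp (-A s) * f s|
        ≤ Real.exp (A t) * ∫ s in (0:ℝ)..t, |Real.exp (-A s) * f s| :=
          mul_le_mul_of_nonneg_left h1 (Real.exp_pos _).le
      _ = _ := h2
      _ ≤ _ := h3
      _ = _ := h4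
  -- t * exp(-δ t) ≤ (2/δ) exp (-r t)
  have htexp : t * Real.exp (-δ * t) ≤ (2 / δ) * Real.exp (-r * t) := by
    have h1 : t * Real.exp (-r * t) ≤ 2 / δ := by
      have h2 : r * t ≤ Real.exp (r * t) := (Real.add_one_le_exp (r * t)).trans' (by linarith [mul_nonneg hr.le ht])
      have h3 : t ≤ Real.exp (r * t) / r := by
        rw [le_div_iff₀ hr]
        linarith [h2]
      calc t * Real.exp (-r * t) ≤ (Real.exp (r * t) / r) * Real.exp (-r * t) := by
            apply mul_le_mul_of_nonneg_right h3 (Real.exp_pos _).le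
        _ = 1 / r := by
            rw [div_mul_eq_mul_div, ← Real.exp_add]
            simp
        _ = 2 / δ := by rw [hrdef]; ring
    have h4 : Real.exp (-δ * t) = Real.exp (-r * t) * Real.exp (-r * t) := by
      rw [← Real.exp_add, hrdef]; ring_nf
    rw [h4]
    calc t * (Real.exp (-r * t) * Real.exp (-r * t))
        = (t * Real.exp (-r * t)) * Real.exp (-r * t) := by ring
      _ ≤ (2 / δ) * Real.exp (-r * t) :=
          mul_le_mul_of_nonneg_right h1 (Real.exp_pos _).le
  -- combine
  calc |x t| = |Real.exp (A t) * (x 0 + ∫ s in (0:ℝ)..t, Real.exp (-A s) * f s)| := by rw [hxt]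
    _ ≤ Real.exp (A t) * |x 0| + Real.exp (A t) * |∫ s in (0:ℝ)..t, Real.exp (-A s) * f s| := by
        rw [abs_mul, abs_of_pos (Real.exp_pos _), ← mul_add]
        apply mul_le_mul_of_nonneg_left (abs_add_le _ _) (Real.exp_pos _).le
    _ ≤ (Real.exp c * Real.exp (-r * t)) * |x 0|
        + t * (Real.exp (2 * c) * K * Real.exp (-δ * t)) := by
        apply add_le_add _ hint
        apply mul_le_mul_of_nonneg_right hterm1 (abs_nonneg _)
    _ ≤ (Real.exp c + Real.exp (2 * c) * (2 / δ)) * (|x 0| + K) * Real.exp (-r * t) := by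
        have e1 : t * (Real.exp (2 * c) * K * Real.exp (-δ * t))
            = Real.exp (2 * c) * K * (t * Real.exp (-δ * t)) := by ring
        rw [e1]
        have e2 : Real.exp (2 * c) * K * (t * Real.exp (-δ * t))
            ≤ Real.exp (2 * c) * K * ((2 / δ) * Real.exp (-r * t)) :=
          mul_le_mul_of_nonneg_left htexp (by positivity)
        have e3 : (0:ℝ) < Real.exp (-r * t) := Real.exp_pos _
        nlinarith [e2, mul_nonneg (mul_nonneg (Real.exp_pos c).le hK) e3.le,
          mul_nonneg (mul_nonneg (mul_nonneg (Real.exp_pos (2*c)).le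
            (by positivity : (0:ℝ) ≤ 2/δ)) (abs_nonneg (x 0))) e3.le]


/-- For an upper-triangular continuous bounded `B(t)` whose diagonal averages
converge to negative limits, every solution of `ż = B(t)z` decays exponentially:
there exist `a > 0`, `C > 0` with `‖z(t)‖ ≤ C e^{−at} ‖z(0)‖`. -/
theorem stmt19 {d : ℕ} (B : ℝ → Matrix (Fin d) (Fin d) ℝ)
    (hB : Continuous B) (M : ℝ) (hbdd : ∀ t i j, |B t i j| ≤ M)
    (htri : ∀ t, (B t).BlockTriangular id)
    (hdiag : ∀ i, ∃ l : ℝ, l < 0 ∧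
      Filter.Tendsto (fun t => (1 / t) * ∫ s in (0:ℝ)..t, B s i i)
        Filter.atTop (nhds l)) :
    ∃ a > 0, ∃ C > 0, ∀ z : ℝ → Fin d → ℝ,
      (∀ t, HasDerivAt z ((B t).mulVec (z t)) t) →
        ∀ t, 0 ≤ t → ‖z t‖ ≤ C * Real.exp (-a * t) * ‖z 0‖ := by
  set M' : ℝ := max M 0 with hM'def
  have hM'0 : 0 ≤ M' := le_max_right _ _
  have hM' : ∀ t i j, |B t i j| ≤ M' := fun t i j => (hbdd t i j).trans (le_max_left _ _)
  have hBij : ∀ i j, Continuous fun t => B t i j := fun i j =>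
    (continuous_apply j).comp ((continuous_apply i).comp hB)
  have main : ∀ j : ℕ, ∃ r, 0 < r ∧ ∃ C, 0 < C ∧ ∀ z : ℝ → Fin d → ℝ,
      (∀ t, HasDerivAt z ((B t).mulVec (z t)) t) →
      ∀ i : Fin d, d - j ≤ (i : ℕ) → ∀ t, 0 ≤ t →
        |z t i| ≤ C * Real.exp (-r * t) * ‖z 0‖ := by
    intro j
    induction j with
    | zero =>
      refine ⟨1, one_pos, 1, one_pos, fun z hz i hi => ?_⟩
      exact absurd i.isLt (by omega)
    | succ j ih =>
      obtain ⟨r, hrpos, C, hCpos, hIH⟩ := ih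
      by_cases hjd : d ≤ j
      · have hEq : d - (j + 1) = d - j := by omega
        rw [hEq]
        exact ⟨r, hrpos, C, hCpos, hIH⟩
      · push_neg at hjd
        set i₀ : Fin d := ⟨d - (j + 1), by omega⟩ with hi₀def
        obtain ⟨l, hl, hav⟩ := hdiag i₀
        obtain ⟨r', hr', C', hC', hsc⟩ :=
          scalar_decay (fun t => B t i₀ i₀) (hBij i₀ i₀) l hl hav r hrpos
        refine ⟨min r r', lt_min hrpos hr', C + C' * (1 + d * M' * C), by positivity, ?_⟩
        intro z hz i hi t ht
        have hexpmin : Real.exp (-r * t) ≤ Real.exp (-(min r r') * t) ∧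
            Real.exp (-r' * t) ≤ Real.exp (-(min r r') * t) := by
          constructor <;> (apply Real.exp_le_exp.mpr; nlinarith [min_le_left r r', min_le_right r r'])
        by_cases him : d - j ≤ (i : ℕ)
        · have h1 := hIH z hz i him t ht
          calc |z t i| ≤ C * Real.exp (-r * t) * ‖z 0‖ := h1
            _ ≤ (C + C' * (1 + d * M' * C)) * Real.exp (-(min r r') * t) * ‖z 0‖ := by
                have hC'nn : 0 ≤ C' * (1 + d * M' * C) := by positivity
                have hme := hexpmin.1
                have hz0 : (0:ℝ) ≤ ‖z 0‖ := norm_nonneg _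
                have s1 : C * Real.exp (-r * t) * ‖z 0‖
                    ≤ C * Real.exp (-(min r r') * t) * ‖z 0‖ :=
                  mul_le_mul_of_nonneg_right (mul_le_mul_of_nonneg_left hme hCpos.le) hz0
                have s2 : C * Real.exp (-(min r r') * t) * ‖z 0‖
                    ≤ (C + C' * (1 + d * M' * C)) * Real.exp (-(min r r') * t) * ‖z 0‖ := by
                  apply mul_le_mul_of_nonneg_right _ hz0
                  apply mul_le_mul_of_nonneg_right _ (Real.exp_pos _).le
                  linarith
                linarith
        · have hii : i = i₀ := by
            apply Fin.ext
            have := i.isLt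
            simp only [hi₀def]
            omega
        -- component continuity and derivatives
          have hzc : ∀ j' : Fin d, Continuous fun u => z u j' := fun j' =>
            Differentiable.continuous fun u => ((hasDerivAt_pi.mp (hz u)) j').differentiableAt
          have hmvc : Continuous fun u => (B u).mulVec (z u) i₀ := by
            simp only [Matrix.mulVec, dotProduct]
            exact continuous_finset_sum _ fun j' _ => (hBij i₀ j').mul (hzc j')
          have hfc : Continuous fun u => (B u).mulVec (z u) i₀ - B u i₀ i₀ * z u i₀ :=
            hmvc.sub ((hBij i₀ i₀).mul (hzc i₀))
          have hxderiv : ∀ u, HasDerivAt (fun v => z v i₀)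
              (B u i₀ i₀ * z u i₀ + ((B u).mulVec (z u) i₀ - B u i₀ i₀ * z u i₀)) u := by
            intro u
            have h := (hasDerivAt_pi.mp (hz u)) i₀
            have he : (B u).mulVec (z u) i₀
                = B u i₀ i₀ * z u i₀ + ((B u).mulVec (z u) i₀ - B u i₀ i₀ * z u i₀) := by ring
            exact he ▸ h
          -- bound on the forcing term
          have hfb : ∀ u, 0 ≤ u → |(B u).mulVec (z u) i₀ - B u i₀ i₀ * z u i₀|
              ≤ (d * M' * C * ‖z 0‖) * Real.exp (-r * u) := by
            intro u hu
            have hsum : (B u).mulVec (z u) i₀ - B u i₀ i₀ * z u i₀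
                = ∑ j' ∈ Finset.univ.filter (fun j' => i₀ < j'), B u i₀ j' * z u j' := by
              simp only [Matrix.mulVec, dotProduct]
              rw [← Finset.sum_filter_add_sum_filter_not Finset.univ (fun j' => i₀ < j')]
              have h2 : ∑ j' ∈ Finset.univ.filter (fun j' => ¬ i₀ < j'), B u i₀ j' * z u j'
                  = B u i₀ i₀ * z u i₀ := by
                apply Finset.sum_eq_single_of_mem
                · simp
                · intro j' hj' hne
                  have hlt : j' < i₀ := by
                    simp only [Finset.mem_filter] at hj'
                    rcases lt_or_eq_of_le (not_lt.mp hj'.2) with h | h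
                    · exact h
                    · exact absurd (Fin.ext (by exact_mod_cast congrArg Fin.val h)) hne
                  have := htri u (show (id j' : Fin d) < id i₀ from hlt)
                  rw [this, zero_mul]
              rw [h2]; ring
            rw [hsum]
            calc |∑ j' ∈ Finset.univ.filter (fun j' => i₀ < j'), B u i₀ j' * z u j'|
                ≤ ∑ j' ∈ Finset.univ.filter (fun j' => i₀ < j'), |B u i₀ j' * z u j'| :=
                  Finset.abs_sum_le_sum_abs _ _
              _ ≤ ∑ _j' ∈ Finset.univ.filter (fun j' => i₀ < j'), M' * (C * Real.exp (-r * u) * ‖z 0‖) := by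
                  apply Finset.sum_le_sum
                  intro j' hj'
                  rw [abs_mul]
                  have hj'big : d - j ≤ (j' : ℕ) := by
                    simp only [Finset.mem_filter] at hj'
                    have : (i₀ : ℕ) < (j' : ℕ) := hj'.2
                    simp only [hi₀def] at this
                    omega
                  exact mul_le_mul (hM' u i₀ j') (hIH z hz j' hj'big u hu) (abs_nonneg _) hM'0
              _ ≤ (d * M' * C * ‖z 0‖) * Real.exp (-r * u) := by
                  rw [Finset.sum_const, nsmul_eq_mul]
                  have hcard : ((Finset.univ.filter (fun j' => i₀ < j')).card : ℝ) ≤ (d : ℝ) := by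
                    have := Finset.card_filter_le Finset.univ (fun j' : Fin d => i₀ < j')
                    simp only [Finset.card_univ, Fintype.card_fin] at this
                    exact_mod_cast this
                  have hb : (0:ℝ) ≤ M' * (C * Real.exp (-r * u) * ‖z 0‖) := by positivity
                  calc ((Finset.univ.filter (fun j' => i₀ < j')).card : ℝ)
                        * (M' * (C * Real.exp (-r * u) * ‖z 0‖))
                      ≤ (d : ℝ) * (M' * (C * Real.exp (-r * u) * ‖z 0‖)) :=
                        mul_le_mul_of_nonneg_right hcard hb
                    _ = (d * M' * C * ‖z 0‖) * Real.exp (-r * u) := by ring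
          have hK : (0:ℝ) ≤ d * M' * C * ‖z 0‖ := by positivity
          have hres := hsc (fun v => z v i₀)
            (fun u => (B u).mulVec (z u) i₀ - B u i₀ i₀ * z u i₀) hfc hxderiv
            (d * M' * C * ‖z 0‖) hK hfb t ht
          have hx0 : |z 0 i₀| ≤ ‖z 0‖ := by
            have := norm_le_pi_norm (z 0) i₀
            rwa [Real.norm_eq_abs] at this
          rw [hii]
          calc |z t i₀| ≤ C' * (|z 0 i₀| + d * M' * C * ‖z 0‖) * Real.exp (-r' * t) := hres
            _ ≤ C' * (1 + d * M' * C) * ‖z 0‖ * Real.exp (-r' * t) := by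
                have h1 : |z 0 i₀| + d * M' * C * ‖z 0‖ ≤ (1 + d * M' * C) * ‖z 0‖ := by
                  nlinarith [norm_nonneg (z 0)]
                nlinarith [mul_le_mul_of_nonneg_right
                  (mul_le_mul_of_nonneg_left h1 hC'.le) (Real.exp_pos (-r' * t)).le]
            _ ≤ (C + C' * (1 + d * M' * C)) * Real.exp (-(min r r') * t) * ‖z 0‖ := by
                have h2 := hexpmin.2
                have hz0 : (0:ℝ) ≤ ‖z 0‖ := norm_nonneg _
                have hp : (0:ℝ) ≤ C' * (1 + d * M' * C) := by positivity
                nlinarith [mul_le_mul_of_nonneg_left h2 (mul_nonneg hp hz0),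
                  mul_nonneg (mul_nonneg hCpos.le hz0) (Real.exp_pos (-(min r r') * t)).le]
  obtain ⟨r, hrpos, C, hCpos, hP⟩ := main d
  refine ⟨r, hrpos, C, hCpos, fun z hz t ht => ?_⟩
  have hnn : (0:ℝ) ≤ C * Real.exp (-r * t) * ‖z 0‖ := by positivity
  apply (pi_norm_le_iff_of_nonneg hnn).mpr
  intro i
  rw [Real.norm_eq_abs]
  exact hP z hz i (by omega) t ht
end
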